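/- arXiv:0804.1355 — 3 statements merged into one kernel-verified Lean document; each statement's English description precedes it below -/
import Mathlib

section
/- (Gauss's Lemma variant for cyclotomic integers) Let q and r be primes with r = nq + 1 for some positive integer n, let b ∈ Z/rZ with b ≠ 1 and b^q = 1, and let φ: Z[ζ_q] → Z/rZ be the ring homomorphism sending ζ_q to b. Let d(t) ∈ Z[ζ_q][t] have degree 2k, and suppose φ applied coefficientwise to d(t) also has degree 2k. If d(t) = λ t^m f(t) \overline{f(t)} for some λ ∈ Q(ζ_q), m ∈ Z, and f ∈ Q(ζ_q)[t, t^{-1}] (i.e., d is a norm over Q(ζ_q)), then φ(d(t)) factors in (Z/rZ)[t] as a product of two polynomials each of degree k. -/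
open Polynomial LaurentPolynomial


section auxA
variable {A : Type*} [CommRing A]

theorem aux_conj_T (conj : LaurentPolynomial A ≃+* LaurentPolynomial A)
    (hconjT : conj (T 1) = T (-1)) : ∀ n : ℤ, conj (T n) = T (-n) := by
  have h1 : (T 1 * T (-1) : LaurentPolynomial A) = 1 := by
    rw [← T_add]; norm_num
  have h2 : (T (-1) : LaurentPolynomial A) * conj (T (-1)) = 1 := by
    have := congrArg conj h1
    rw [map_mul, map_one, hconjT] at this
    exact this
  have hneg : conj (T (-1)) = (T 1 : LaurentPolynomial A) := by
    calc conj (T (-1)) = (T 1 * T (-1)) * conj (T (-1)) := by rw [h1, one_mul]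
    _ = T 1 * (T (-1) * conj (T (-1))) := by rw [mul_assoc]
    _ = T 1 := by rw [h2, mul_one]
  intro n
  induction n using Int.induction_on with
  | zero => simpa using map_one conj
  | succ i ih =>
      have h : (T ((i : ℤ) + 1) : LaurentPolynomial A) = T i * T 1 := T_add _ _
      rw [h, map_mul, ih, hconjT, ← T_add]
      congr 1; ring
  | pred i ih =>
      have h : (T (-(i : ℤ) - 1) : LaurentPolynomial A) = T (-i) * T (-1) := by
        rw [sub_eq_add_neg, T_add]
      rw [h, map_mul, ih, hneg, ← T_add]
      congr 1
      ring

theorem aux_conj_toLaurent (σ : A ≃+* A)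
    (conj : LaurentPolynomial A ≃+* LaurentPolynomial A)
    (hconjC : ∀ a, conj (LaurentPolynomial.C a) = LaurentPolynomial.C (σ a))
    (hconjT : conj (T 1) = T (-1))
    (p : A[X]) (N : ℕ) (hN : p.natDegree ≤ N) :
    toLaurent (reflect N (p.map (σ : A →+* A))) = conj (toLaurent p) * T (N : ℤ) := by
  have key : ∀ s : Finset ℕ, (∀ j ∈ s, j ≤ N) →
      toLaurent (reflect N ((∑ j ∈ s, Polynomial.C (p.coeff j) * X ^ j).map (σ : A →+* A)))
        = conj (toLaurent (∑ j ∈ s, Polynomial.C (p.coeff j) * X ^ j)) * T (N : ℤ) := by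
    intro s
    induction s using Finset.induction_on with
    | empty => intro _; simp
    | insert _ _ hnotmem =>
        rename_i a s ih
        intro hmem
        rw [Finset.sum_insert hnotmem]
        simp only [Polynomial.map_add, reflect_add, map_add, add_mul]
        rw [ih (fun j hj => hmem j (Finset.mem_insert_of_mem hj))]
        congr 1
        have ha : a ≤ N := hmem a (Finset.mem_insert_self a s)
        rw [Polynomial.map_mul, Polynomial.map_C, Polynomial.map_pow, Polynomial.map_X,
          reflect_C_mul_X_pow, revAt_le ha]
        have h2 : (toLaurent (Polynomial.C (p.coeff a) * X ^ a) : LaurentPolynomial A)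
            = LaurentPolynomial.C (p.coeff a) * T (a : ℤ) := by
          rw [map_mul, Polynomial.toLaurent_C, Polynomial.toLaurent_X_pow]
        have h3 : (toLaurent (Polynomial.C ((σ : A →+* A) (p.coeff a)) * X ^ (N - a)) : LaurentPolynomial A)
            = LaurentPolynomial.C ((σ : A →+* A) (p.coeff a)) * T ((N - a : ℕ) : ℤ) := by
          rw [map_mul, Polynomial.toLaurent_C, Polynomial.toLaurent_X_pow]
        rw [h3, h2, map_mul, hconjC, aux_conj_T conj hconjT, mul_assoc, ← T_add]
        simp only [RingEquiv.coe_toRingHom]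
        rw [Nat.cast_sub ha]
        congr 1
        ring
  have hrep := p.as_sum_support_C_mul_X_pow
  conv_lhs => rw [hrep]
  conv_rhs => rw [hrep]
  exact key p.support (fun j hj => le_trans (le_natDegree_of_mem_supp j hj) hN)
end auxA

open Polynomial

-- factor out powers of X
theorem aux_X_pow_factor {K : Type*} [Field K] :
    ∀ (N : ℕ) (p : K[X]), p.natDegree ≤ N → p ≠ 0 →
      ∃ (t : ℕ) (p₀ : K[X]), p₀.coeff 0 ≠ 0 ∧ p = p₀ * X ^ t := by
  intro N
  induction N with
  | zero =>
      intro p hN hp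
      refine ⟨0, p, ?_, by simp⟩
      intro h0
      obtain ⟨q, hq⟩ : (X : K[X]) ∣ p := X_dvd_iff.mpr h0
      have hq0 : q ≠ 0 := fun h => hp (by simp [hq, h])
      have : p.natDegree = 1 + q.natDegree := by
        rw [hq, natDegree_mul X_ne_zero hq0, natDegree_X]
      omega
  | succ N ih =>
      intro p hN hp
      by_cases h0 : p.coeff 0 ≠ 0
      · exact ⟨0, p, h0, by simp⟩
      push_neg at h0
      obtain ⟨q, hq⟩ : (X : K[X]) ∣ p := X_dvd_iff.mpr h0
      have hq0 : q ≠ 0 := fun h => hp (by simp [hq, h])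
      have hdeg : p.natDegree = 1 + q.natDegree := by
        rw [hq, natDegree_mul X_ne_zero hq0, natDegree_X]
      obtain ⟨t, p₀, h₀, hfac⟩ := ih q (by omega) hq0
      exact ⟨t + 1, p₀, h₀, by rw [hq, hfac]; ring⟩

section auxB
variable {R K : Type*} [CommRing R] [IsDomain R] [Field K] [Algebra R K] [IsFractionRing R K]

-- lift a polynomial all of whose coefficients are integers
theorem aux_lift (p : K[X]) (h : ∀ j, IsLocalization.IsInteger R (p.coeff j)) :
    ∃ q : R[X], q.map (algebraMap R K) = p := by
  classical
  choose rc hrc using h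
  refine ⟨∑ j ∈ p.support, monomial j (rc j), ?_⟩
  rw [Polynomial.map_sum]
  conv_rhs => rw [p.as_sum_support]
  refine Finset.sum_congr rfl fun j hj => ?_
  rw [Polynomial.map_monomial, hrc]

theorem aux_pick [ValuationRing R] (s : Finset ℕ) (g : ℕ → K)
    (hg : ∀ j ∈ s, g j ≠ 0) (hs : s.Nonempty) :
    ∃ i ∈ s, ∀ j ∈ s, IsLocalization.IsInteger R (g j / g i) := by
  classical
  refine Finset.induction_on (motive := fun s => (∀ j ∈ s, g j ≠ 0) → s.Nonempty →
      ∃ i ∈ s, ∀ j ∈ s, IsLocalization.IsInteger R (g j / g i)) s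
    (fun _ hs => absurd hs (by simp)) ?_ hg hs
  intro a s hnotmem ih hg hs
  rcases s.eq_empty_or_nonempty with rfl | hsn
  · refine ⟨a, Finset.mem_insert_self a ∅, fun j hj => ?_⟩
    have hj' : j = a := by simpa using hj
    rw [hj', div_self (hg a (Finset.mem_insert_self a _))]
    exact IsLocalization.isInteger_one
  obtain ⟨i, hi, hint⟩ := ih (fun j hj => hg j (Finset.mem_insert_of_mem hj)) hsn
  have hgi : g i ≠ 0 := hg i (Finset.mem_insert_of_mem hi)
  have hga : g a ≠ 0 := hg a (Finset.mem_insert_self a s)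
  rcases ValuationRing.isInteger_or_isInteger R (g a / g i) with hai | hia
  · refine ⟨i, Finset.mem_insert_of_mem hi, fun j hj => ?_⟩
    rcases Finset.mem_insert.mp hj with rfl | hj
    · exact hai
    · exact hint j hj
  · rw [inv_div] at hia
    refine ⟨a, Finset.mem_insert_self a s, fun j hj => ?_⟩
    rcases Finset.mem_insert.mp hj with rfl | hj
    · rw [div_self hga]; exact IsLocalization.isInteger_one
    · have heq : g j / g a = (g j / g i) * (g i / g a) := by
        field_simp
      rw [heq]
      exact IsLocalization.isInteger_mul (hint j hj) hia

theorem aux_primitive [ValuationRing R] (p : K[X]) (hp : p ≠ 0) :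
    ∃ (c : K) (p' : R[X]) (i : ℕ), c ≠ 0 ∧
      p'.map (algebraMap R K) = Polynomial.C c * p ∧ p'.coeff i = 1 := by
  obtain ⟨i, hi, hint⟩ := aux_pick (R := R) p.support p.coeff
    (fun j hj => mem_support_iff.mp hj) (nonempty_support_iff.mpr hp)
  have hpi : p.coeff i ≠ 0 := mem_support_iff.mp hi
  set c : K := (p.coeff i)⁻¹ with hc
  have hc0 : c ≠ 0 := inv_ne_zero hpi
  have hall : ∀ j, IsLocalization.IsInteger R ((Polynomial.C c * p).coeff j) := by
    intro j
    rw [coeff_C_mul]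
    by_cases hj : j ∈ p.support
    · have : c * p.coeff j = p.coeff j / p.coeff i := by
        rw [hc, div_eq_mul_inv, mul_comm]
      rw [this]; exact hint j hj
    · rw [notMem_support_iff.mp hj, mul_zero]
      exact IsLocalization.isInteger_zero
  obtain ⟨p', hp'⟩ := aux_lift (Polynomial.C c * p) hall
  refine ⟨c, p', i, hc0, hp', ?_⟩
  have h1 : algebraMap R K (p'.coeff i) = 1 := by
    have := congrArg (fun q => Polynomial.coeff q i) hp'
    simp only [coeff_map, coeff_C_mul] at this
    rw [this, hc, inv_mul_cancel₀ hpi]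
  have := IsFractionRing.injective R K (h1.trans (map_one (algebraMap R K)).symm)
  exact this
end auxB

set_option maxHeartbeats 1000000 in
set_option synthInstance.maxHeartbeats 400000 in
theorem aux_main {K' : Type*} [Field K'] [CharZero K'] (O : Subalgebra ℤ K')
    [IsDedekindDomain O] [IsFractionRing O K']
    (σ : K' ≃+* K')
    (conj : LaurentPolynomial K' ≃+* LaurentPolynomial K')
    (hconjC : ∀ a, conj (LaurentPolynomial.C a) = LaurentPolynomial.C (σ a))
    (hconjT : conj (T 1) = T (-1))
    (r : ℕ) (hr : r.Prime) (φ : O →+* ZMod r)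
    (d : Polynomial O)
    (k : ℕ) (hd : d.natDegree = 2 * k) (hdφ : (d.map φ).natDegree = 2 * k)
    (hnorm : ∃ (lam : K') (m : ℤ) (f : LaurentPolynomial K'),
      (d.map (algebraMap O K')).toLaurent =
        LaurentPolynomial.C lam * T m * f * conj f) :
    ∃ g h : Polynomial (ZMod r),
      d.map φ = g * h ∧ g.natDegree = k ∧ h.natDegree = k := by
  classical
  haveI : Fact (Nat.Prime r) := ⟨hr⟩
  rcases Nat.eq_zero_or_pos k with hk0 | hk
  · subst hk0
    exact ⟨d.map φ, 1, (mul_one _).symm, by simpa using hdφ, natDegree_one⟩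
  obtain ⟨lam, m, f, hEq⟩ := hnorm
  have hinj : Function.Injective (algebraMap O K') := fun a b hab => Subtype.ext hab
  have hd0 : d ≠ 0 := by
    intro h
    simp only [h, Polynomial.map_zero, natDegree_zero] at hdφ
    omega
  set dK := d.map (algebraMap O K') with hdK
  have hdK0 : dK ≠ 0 := fun h => hd0 ((Polynomial.map_eq_zero_iff hinj).mp h)
  have hdKdeg : dK.natDegree = 2 * k := by
    rw [hdK, natDegree_map_eq_of_injective hinj, hd]
  have hlam : lam ≠ 0 := by
    rintro rfl
    rw [map_zero, zero_mul, zero_mul, zero_mul] at hEq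
    exact hdK0 (Polynomial.toLaurent_eq_zero.mp hEq)
  have hf0 : f ≠ 0 := by
    rintro rfl
    rw [mul_zero, zero_mul] at hEq
    exact hdK0 (Polynomial.toLaurent_eq_zero.mp hEq)
  obtain ⟨n₀, F', hF'⟩ := exists_T_pow f
  have hF'0 : F' ≠ 0 := by
    rintro rfl
    rw [map_zero] at hF'
    exact hf0 (((isUnit_T (n₀ : ℤ)).mul_left_eq_zero).mp hF'.symm)
  obtain ⟨t, F₀, hF₀c, hfac⟩ := aux_X_pow_factor F'.natDegree F' le_rfl hF'0
  have hF₀0 : F₀ ≠ 0 := fun h => hF₀c (by rw [h]; simp)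
  set e := F₀.natDegree with he
  set s : ℤ := (t : ℤ) - n₀ with hs
  have hf_eq : f = toLaurent F₀ * T s := by
    have h1 : toLaurent F' = toLaurent F₀ * T (t : ℤ) := by
      rw [hfac, map_mul, Polynomial.toLaurent_X_pow]
    calc f = f * T (n₀ : ℤ) * T (-(n₀ : ℤ)) := by
            rw [mul_T_assoc]; simp
    _ = toLaurent F₀ * T (t : ℤ) * T (-(n₀ : ℤ)) := by rw [← h1, hF']
    _ = toLaurent F₀ * T s := by rw [mul_T_assoc, hs]; congr 1
  have hσinj : Function.Injective (σ : K' →+* K') := σ.injective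
  set Rv := (F₀.map (σ : K' →+* K')).reverse with hRv
  have hmdeg : (F₀.map (σ : K' →+* K')).natDegree = e := by
    rw [natDegree_map_eq_of_injective hσinj]
  have hmap0 : F₀.map (σ : K' →+* K') ≠ 0 := (Polynomial.map_ne_zero_iff hσinj).mpr hF₀0
  have hmapc : (F₀.map (σ : K' →+* K')).coeff 0 ≠ 0 := by
    rw [coeff_map]
    exact fun hcon => hF₀c (σ.injective (by simpa using hcon))
  have hRvL : toLaurent Rv = conj (toLaurent F₀) * T (e : ℤ) := by
    have hrefl : Rv = reflect e (F₀.map (σ : K' →+* K')) := by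
      rw [hRv]
      show reflect ((F₀.map (σ : K' →+* K')).natDegree) _ = _
      rw [hmdeg]
    rw [hrefl]
    exact aux_conj_toLaurent σ conj hconjC hconjT F₀ e le_rfl
  have hconjF : conj (toLaurent F₀) = toLaurent Rv * T (-(e : ℤ)) := by
    rw [hRvL, mul_T_assoc]; simp
  have hEq2 : toLaurent dK = toLaurent (Polynomial.C lam * F₀ * Rv) * T (m - e) := by
    rw [hEq, hf_eq, map_mul, hconjF, aux_conj_T conj hconjT s]
    have hQL : toLaurent (Polynomial.C lam * F₀ * Rv)
        = LaurentPolynomial.C lam * toLaurent F₀ * toLaurent Rv := by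
      rw [map_mul, map_mul, Polynomial.toLaurent_C]
    rw [hQL]
    calc LaurentPolynomial.C lam * T m * (toLaurent F₀ * T s)
          * (toLaurent Rv * T (-(e : ℤ)) * T (-s))
        = (LaurentPolynomial.C lam * toLaurent F₀ * toLaurent Rv)
          * (T m * (T s * (T (-(e : ℤ)) * T (-s)))) := by ring
      _ = (LaurentPolynomial.C lam * toLaurent F₀ * toLaurent Rv) * T (m - e) := by
          rw [← T_add, ← T_add, ← T_add]
          congr 1
          ring
  set Q := Polynomial.C lam * F₀ * Rv with hQdef
  have hRv0 : Rv ≠ 0 := by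
    rw [hRv, Ne, Polynomial.reverse_eq_zero]
    exact hmap0
  have hRvc : Rv.coeff 0 ≠ 0 := by
    rw [hRv, Polynomial.coeff_zero_reverse]
    exact leadingCoeff_ne_zero.mpr hmap0
  have hQc : Q.coeff 0 ≠ 0 := by
    rw [hQdef, Polynomial.mul_coeff_zero, Polynomial.mul_coeff_zero, coeff_C_zero]
    exact mul_ne_zero (mul_ne_zero hlam hF₀c) hRvc
  have hQ0 : Q ≠ 0 := fun h => hQc (by rw [h]; simp)
  rcases lt_or_ge (m - (e : ℤ)) 0 with hw | hw
  · exfalso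
    set j := (e - m).toNat with hj
    have hjval : (j : ℤ) = e - m := Int.toNat_of_nonneg (by omega)
    have hjpos : 0 < j := by omega
    have hlau : toLaurent Q = toLaurent (dK * X ^ j) := by
      conv_rhs => rw [map_mul, Polynomial.toLaurent_X_pow]
      rw [hEq2, mul_T_assoc, show m - (e : ℤ) + (j : ℤ) = 0 by omega, T_zero, mul_one]
    have hQeq : Q = dK * X ^ j := Polynomial.toLaurent_injective hlau
    have : Q.coeff 0 = 0 := by
      rw [hQeq, Polynomial.coeff_mul_X_pow']
      rw [if_neg (by omega : ¬ j ≤ 0)]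
    exact hQc this
  · set j := (m - (e : ℤ)).toNat with hj
    have hjval : (j : ℤ) = m - e := Int.toNat_of_nonneg hw
    have hQX : dK = Q * X ^ j := by
      apply Polynomial.toLaurent_injective
      conv_rhs => rw [map_mul, Polynomial.toLaurent_X_pow]
      rw [hEq2, hjval]
    have hClam : (Polynomial.C lam : K'[X]) ≠ 0 := by
      simpa using hlam
    have hCF : Polynomial.C lam * F₀ ≠ 0 := mul_ne_zero hClam hF₀0
    have hQdeg : Q.natDegree = e + e := by
      rw [hQdef, natDegree_mul hCF hRv0,
        natDegree_C_mul_eq_of_mul_eq_one (inv_mul_cancel₀ hlam)]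
      congr 1
      rw [hRv, Polynomial.reverse_natDegree, hmdeg,
        natTrailingDegree_eq_zero.mpr (Or.inr hmapc), Nat.sub_zero]
    have h2k : 2 * k = (e + e) + j := by
      rw [← hdKdeg, hQX, natDegree_mul hQ0 (pow_ne_zero _ X_ne_zero),
        natDegree_X_pow, hQdeg]
    have hek : e ≤ k := by omega
    set G := Polynomial.C lam * F₀ * X ^ (k - e) with hG
    set H := Rv * X ^ (k - e) with hH
    have hGH : dK = G * H := by
      rw [hQX, hG, hH, hQdef]
      have hXj : (X : K'[X]) ^ j = X ^ (k - e) * X ^ (k - e) := by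
        rw [← pow_add]
        congr 1
        omega
      rw [hXj]; ring
    have hG0 : G ≠ 0 := mul_ne_zero hCF (pow_ne_zero _ X_ne_zero)
    have hH0 : H ≠ 0 := mul_ne_zero hRv0 (pow_ne_zero _ X_ne_zero)
    have hGdeg : G.natDegree = k := by
      rw [hG, natDegree_mul hCF (pow_ne_zero _ X_ne_zero), natDegree_X_pow,
        natDegree_C_mul_eq_of_mul_eq_one (inv_mul_cancel₀ hlam)]
      omega
    have hHdeg : H.natDegree = k := by
      rw [hH, natDegree_mul hRv0 (pow_ne_zero _ X_ne_zero), natDegree_X_pow]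
      have : Rv.natDegree = e := by
        rw [hRv, Polynomial.reverse_natDegree, hmdeg,
          natTrailingDegree_eq_zero.mpr (Or.inr hmapc), Nat.sub_zero]
      omega
    -- Part C : localization setup
    set P := RingHom.ker φ with hPdef
    haveI hPmax : P.IsMaximal :=
      RingHom.ker_isMaximal_of_surjective φ (ZMod.ringHom_surjective φ)
    haveI : P.IsPrime := hPmax.isPrime
    have hP0 : P ≠ ⊥ := by
      intro hbot
      have hinjφ : Function.Injective φ := (RingHom.injective_iff_ker_eq_bot φ).mpr hbot
      haveI : NeZero r := ⟨hr.pos.ne'⟩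
      haveI : Finite O := Finite.of_injective φ hinjφ
      haveI : CharZero O := ⟨fun a b hab => Nat.cast_injective (R := K') (by
        have h2 := congrArg (algebraMap O K') hab
        rwa [map_natCast, map_natCast] at h2)⟩
      haveI : Infinite O := Infinite.of_injective _ (Nat.cast_injective : Function.Injective ((↑) : ℕ → O))
      exact not_finite O
    set S := Localization.AtPrime P with hSdef
    haveI : IsDiscreteValuationRing S :=
      IsLocalization.AtPrime.isDiscreteValuationRing_of_dedekind_domain O hP0 S
    haveI : ValuationRing S := inferInstance
    have hu : ∀ y : P.primeCompl, IsUnit (algebraMap O K' y) := by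
      rintro ⟨y, hy⟩
      refine isUnit_iff_ne_zero.mpr ((map_ne_zero_iff _ hinj).mpr ?_)
      rintro rfl
      exact hy P.zero_mem
    letI : Algebra S K' := (IsLocalization.lift (S := S) hu).toAlgebra
    haveI : IsScalarTower O S K' :=
      IsScalarTower.of_algebraMap_eq fun x => (IsLocalization.lift_eq (S := S) hu x).symm
    haveI : IsFractionRing S K' :=
      IsFractionRing.isFractionRing_of_isDomain_of_isLocalization P.primeCompl S K'
    have hu2 : ∀ y : P.primeCompl, IsUnit (φ y) := by
      rintro ⟨y, hy⟩
      exact isUnit_iff_ne_zero.mpr (fun h0 => hy (RingHom.mem_ker.mpr h0))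
    set ψ : S →+* ZMod r := IsLocalization.lift (S := S) hu2 with hψdef
    have hψ : ∀ x : O, ψ (algebraMap O S x) = φ x := fun x => IsLocalization.lift_eq hu2 x
    set dS := d.map (algebraMap O S) with hdS
    have hmapψ : dS.map ψ = d.map φ := by
      rw [hdS, Polynomial.map_map]
      congr 1
      exact RingHom.ext hψ
    have hmapK : dS.map (algebraMap S K') = dK := by
      rw [hdS, Polynomial.map_map, hdK]
      congr 1
      exact (IsScalarTower.algebraMap_eq O S K').symm
    have hSinj : Function.Injective (algebraMap S K') := IsFractionRing.injective S K'
    have hmapinj := Polynomial.map_injective (algebraMap S K') hSinj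
    obtain ⟨cG, G', iG, hcG, hG', hG'c⟩ := aux_primitive (R := S) G hG0
    obtain ⟨cH, H', iH, hcH, hH', hH'c⟩ := aux_primitive (R := S) H hH0
    have hG'deg : G'.natDegree = k := by
      have h2 := natDegree_map_eq_of_injective hSinj G'
      rw [hG', natDegree_C_mul_eq_of_mul_eq_one (inv_mul_cancel₀ hcG), hGdeg] at h2
      exact h2.symm
    have hH'deg : H'.natDegree = k := by
      have h2 := natDegree_map_eq_of_injective hSinj H'
      rw [hH', natDegree_C_mul_eq_of_mul_eq_one (inv_mul_cancel₀ hcH), hHdeg] at h2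
      exact h2.symm
    set c := cG * cH with hc
    have hc0 : c ≠ 0 := mul_ne_zero hcG hcH
    have hKey : (G' * H').map (algebraMap S K')
        = Polynomial.C c * dS.map (algebraMap S K') := by
      rw [Polynomial.map_mul, hG', hH', hmapK, hGH, hc, C_mul]
      ring
    rcases ValuationRing.isInteger_or_isInteger S (K := K') c with ⟨eI, heI⟩ | ⟨eI, heI⟩
    · -- c is integral
      have h1 : (G' * H').map (algebraMap S K')
          = (Polynomial.C eI * dS).map (algebraMap S K') := by
        rw [hKey, Polynomial.map_mul, Polynomial.map_C, heI]
      have h2 : G' * H' = Polynomial.C eI * dS := hmapinj h1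
      have h3 : (G'.map ψ) * (H'.map ψ) = Polynomial.C (ψ eI) * (d.map φ) := by
        have h4 := congrArg (Polynomial.map ψ) h2
        rwa [Polynomial.map_mul, Polynomial.map_mul, Polynomial.map_C, hmapψ] at h4
      by_cases hψe : ψ eI = 0
      · exfalso
        rw [hψe, Polynomial.C_0, zero_mul] at h3
        have hG'ψ : G'.map ψ ≠ 0 := fun hh => one_ne_zero (α := ZMod r) (by
          have h5 := congrArg (fun p => Polynomial.coeff p iG) hh
          simpa [Polynomial.coeff_map, hG'c] using h5)
        have hH'ψ : H'.map ψ ≠ 0 := fun hh => one_ne_zero (α := ZMod r) (by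
          have h5 := congrArg (fun p => Polynomial.coeff p iH) hh
          simpa [Polynomial.coeff_map, hH'c] using h5)
        exact (mul_ne_zero hG'ψ hH'ψ) h3
      · set g := Polynomial.C (ψ eI)⁻¹ * (G'.map ψ) with hg
        set h := H'.map ψ with hh
        have hgh : d.map φ = g * h := by
          rw [hg, hh, mul_assoc, h3, ← mul_assoc, ← Polynomial.C_mul,
            inv_mul_cancel₀ hψe, Polynomial.C_1, one_mul]
        have hgle : g.natDegree ≤ k :=
          le_trans (natDegree_C_mul_le _ _) (le_trans (natDegree_map_le) (le_of_eq hG'deg))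
        have hhle : h.natDegree ≤ k :=
          le_trans (natDegree_map_le) (le_of_eq hH'deg)
        have hsum : 2 * k ≤ g.natDegree + h.natDegree := by
          calc 2 * k = (g * h).natDegree := by rw [← hgh, hdφ]
          _ ≤ g.natDegree + h.natDegree := natDegree_mul_le
        exact ⟨g, h, hgh, by omega, by omega⟩
    · -- c⁻¹ is integral
      have h1 : dS.map (algebraMap S K')
          = (Polynomial.C eI * (G' * H')).map (algebraMap S K') := by
        rw [Polynomial.map_mul, Polynomial.map_C, heI, hKey, ← mul_assoc,
          ← Polynomial.C_mul, inv_mul_cancel₀ hc0, Polynomial.C_1, one_mul]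
      have h2 : dS = Polynomial.C eI * (G' * H') := hmapinj h1
      have h3 : d.map φ = Polynomial.C (ψ eI) * (G'.map ψ * H'.map ψ) := by
        have h4 := congrArg (Polynomial.map ψ) h2
        rwa [hmapψ, Polynomial.map_mul, Polynomial.map_mul, Polynomial.map_C] at h4
      set g := Polynomial.C (ψ eI) * (G'.map ψ) with hg
      set h := H'.map ψ with hh
      have hgh : d.map φ = g * h := by rw [h3, hg, hh]; ring
      have hgle : g.natDegree ≤ k :=
        le_trans (natDegree_C_mul_le _ _) (le_trans (natDegree_map_le) (le_of_eq hG'deg))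
      have hhle : h.natDegree ≤ k :=
        le_trans (natDegree_map_le) (le_of_eq hH'deg)
      have hsum : 2 * k ≤ g.natDegree + h.natDegree := by
        calc 2 * k = (g * h).natDegree := by rw [← hgh, hdφ]
        _ ≤ g.natDegree + h.natDegree := natDegree_mul_le
      exact ⟨g, h, hgh, by omega, by omega⟩


/-- Gauss's-Lemma variant for cyclotomic integers: if `r = nq + 1` with `q, r` prime,
`φ : Z[ζ_q] → Z/rZ` sends `ζ_q` to an element `b ≠ 1` with `b^q = 1`, and
`d ∈ Z[ζ_q][t]` has degree `2k`, with `φ(d)` also of degree `2k`, then whenever `d` is a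
norm over `Q(ζ_q)` (i.e. `d = λ t^m f(t) f̄(t)` in the Laurent ring), the image `φ(d)`
factors in `(Z/rZ)[t]` as a product of two polynomials of degree `k`. -/
theorem stmt14 (q r n : ℕ) (hq : q.Prime) (hr : r.Prime) (hn : 0 < n)
    (hrq : r = n * q + 1)
    (b : ZMod r) (hb1 : b ≠ 1) (hbq : b ^ q = 1)
    (ζ : CyclotomicField q ℚ) (hζ : IsPrimitiveRoot ζ q)
    (σ : CyclotomicField q ℚ ≃+* CyclotomicField q ℚ)
    (hσ : σ ζ = ζ⁻¹)
    (conj : LaurentPolynomial (CyclotomicField q ℚ) ≃+*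
            LaurentPolynomial (CyclotomicField q ℚ))
    (hconjC : ∀ a, conj (LaurentPolynomial.C a) = LaurentPolynomial.C (σ a))
    (hconjT : conj (T 1) = T (-1))
    (φ : (Algebra.adjoin ℤ ({ζ} : Set (CyclotomicField q ℚ))) →+* ZMod r)
    (hφ : φ ⟨ζ, Algebra.self_mem_adjoin_singleton ℤ ζ⟩ = b)
    (d : Polynomial (Algebra.adjoin ℤ ({ζ} : Set (CyclotomicField q ℚ))))
    (k : ℕ) (hd : d.natDegree = 2 * k) (hdφ : (d.map φ).natDegree = 2 * k)
    (hnorm : ∃ (lam : CyclotomicField q ℚ) (m : ℤ)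
        (f : LaurentPolynomial (CyclotomicField q ℚ)),
      (d.map (algebraMap (Algebra.adjoin ℤ ({ζ} : Set (CyclotomicField q ℚ)))
          (CyclotomicField q ℚ))).toLaurent =
        LaurentPolynomial.C lam * T m * f * conj f) :
    ∃ g h : Polynomial (ZMod r),
      d.map φ = g * h ∧ g.natDegree = k ∧ h.natDegree = k := by
  haveI : NeZero q := ⟨hq.ne_zero⟩
  haveI : NeZero (q : ℚ) := ⟨by exact_mod_cast hq.ne_zero⟩
  haveI : IsCyclotomicExtension {q} ℚ (CyclotomicField q ℚ) :=
    CyclotomicField.isCyclotomicExtension q ℚ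
  haveI : CharZero (CyclotomicField q ℚ) :=
    charZero_of_injective_algebraMap (algebraMap ℚ _).injective
  haveI hIC : IsIntegralClosure
      (Algebra.adjoin ℤ ({ζ} : Set (CyclotomicField q ℚ))) ℤ
      (CyclotomicField q ℚ) :=
    IsCyclotomicExtension.Rat.isIntegralClosure_adjoin_singleton_of_prime
      (p := q) (hp := ⟨hq⟩) hζ
  haveI : FiniteDimensional ℚ (CyclotomicField q ℚ) :=
    IsCyclotomicExtension.finiteDimensional (S := {q}) (K := ℚ) _
  haveI : IsDedekindDomain
      (Algebra.adjoin ℤ ({ζ} : Set (CyclotomicField q ℚ))) :=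
    IsIntegralClosure.isDedekindDomain ℤ ℚ (CyclotomicField q ℚ) _
  haveI : IsFractionRing
      (Algebra.adjoin ℤ ({ζ} : Set (CyclotomicField q ℚ)))
      (CyclotomicField q ℚ) :=
    IsIntegralClosure.isFractionRing_of_finite_extension ℤ ℚ
      (CyclotomicField q ℚ) _
  exact aux_main _ σ conj hconjC hconjT r hr φ d k hd hdφ hnorm
end

section
/- The polynomial p(t) = t^4 + (ζ^2 + ζ^3 − 1) t^3 + (−2 − ζ^2 − ζ^3) t^2 + (ζ^2 + ζ^3 − 1) t + 1, where ζ = e^{2πi/5}, has coefficients in the real quadratic ring Z[(1+√5)/2], is irreducible over Q(√5), and is not of the form λ t^k f(t) \overline{f(t)} for any λ ∈ Q(ζ_5), k ∈ Z, f ∈ Q(ζ_5)[t, t^{-1}] (with the involution t ↦ t^{-1}, ζ_5 ↦ ζ_5^{-1}). -/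
open Polynomial LaurentPolynomial

section Aux

/-! ### Evaluation of Laurent polynomials -/

noncomputable def LEval {x : ℂ} (hx : x ≠ 0) : LaurentPolynomial ℂ →+* ℂ :=
  AddMonoidAlgebra.liftNCRingHom (RingHom.id ℂ)
    { toFun := fun n => x ^ (Multiplicative.toAdd n)
      map_one' := by simp
      map_mul' := fun a b => by
        simpa using zpow_add₀ hx (Multiplicative.toAdd a) (Multiplicative.toAdd b) }
    fun _ _ => Commute.all _ _

lemma leval_single {x : ℂ} (hx : x ≠ 0) (n : ℤ) (a : ℂ) :
    LEval hx (AddMonoidAlgebra.single n a) = a * x ^ n := by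
  unfold LEval
  exact AddMonoidAlgebra.liftNC_single _ _ _ _

lemma leval_C {x : ℂ} (hx : x ≠ 0) (a : ℂ) : LEval hx (LaurentPolynomial.C a) = a := by
  rw [← LaurentPolynomial.single_eq_C, leval_single]; simp

lemma leval_T {x : ℂ} (hx : x ≠ 0) (n : ℤ) : LEval hx (T n) = x ^ n := by
  rw [show (T n : LaurentPolynomial ℂ) = AddMonoidAlgebra.single n 1 from rfl, leval_single]; simp

lemma leval_toLaurent {x : ℂ} (hx : x ≠ 0) (Q : Polynomial ℂ) :
    LEval hx (Q.toLaurent) = Q.eval x := by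
  induction Q using Polynomial.induction_on' with
  | add p q hp hq => simp [map_add, hp, hq]
  | monomial n a =>
      rw [← Polynomial.C_mul_X_pow_eq_monomial]
      simp [map_mul, map_pow, Polynomial.toLaurent_C, Polynomial.toLaurent_X, leval_C, leval_T,
        ← zpow_natCast]

section ConjSection
variable (conj : LaurentPolynomial ℂ ≃+* LaurentPolynomial ℂ)
  (hconjC : ∀ a : ℂ, conj (LaurentPolynomial.C a) = LaurentPolynomial.C (starRingEnd ℂ a))
  (hconjT : conj (T 1) = T (-1))

omit hconjC in
include hconjT in
lemma conj_T_nat (m : ℕ) : conj (T (m : ℤ)) = T (-(m : ℤ)) := by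
  have h1 : (T (m : ℤ) : LaurentPolynomial ℂ) = T 1 ^ m := by
    rw [LaurentPolynomial.T_pow]; norm_num
  rw [h1, map_pow, hconjT, LaurentPolynomial.T_pow]
  norm_num

omit hconjC in
include hconjT in
lemma conj_T_all (n : ℤ) : conj (T n) = T (-n) := by
  rcases n with m | m
  · exact conj_T_nat conj hconjT m
  · set m' : ℤ := ((m + 1 : ℕ) : ℤ) with hm'
    have hpos : conj (T m') = T (-m') := conj_T_nat conj hconjT (m + 1)
    have hTT : (T (-m') * T m' : LaurentPolynomial ℂ) = 1 := by
      rw [← LaurentPolynomial.T_add]; simp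
    have h2 : conj (T (-m')) * T (-m') = 1 := by
      have := congrArg conj hTT
      rw [map_mul, map_one, hpos] at this
      exact this
    have h3 : (T m' * T (-m') : LaurentPolynomial ℂ) = 1 := by
      rw [← LaurentPolynomial.T_add]; simp
    have : conj (T (-m')) = conj (T (-m')) * (T (-m') * T m') := by
      rw [hTT, mul_one]
    rw [← mul_assoc, h2, one_mul] at this
    show conj (T (Int.negSucc m)) = _
    have hns : (Int.negSucc m) = -m' := by rw [Int.negSucc_eq, hm']; push_cast; ring
    rw [hns, this]
    norm_num

include hconjC hconjT in
lemma leval_conj {x : ℂ} (hx : x ≠ 0) (hxc : starRingEnd ℂ x = x⁻¹)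
    (f : LaurentPolynomial ℂ) :
    LEval hx (conj f) = starRingEnd ℂ (LEval hx f) := by
  have key : (LEval hx).comp conj.toRingHom
      = ((starRingEnd ℂ) : ℂ →+* ℂ).comp (LEval hx) := by
    apply AddMonoidAlgebra.ringHom_ext
    · intro b
      show LEval hx (conj (AddMonoidAlgebra.single 0 b)) = starRingEnd ℂ (LEval hx (AddMonoidAlgebra.single 0 b))
      rw [LaurentPolynomial.single_eq_C, hconjC, leval_C, leval_C]
    · intro a
      show LEval hx (conj (T a)) = starRingEnd ℂ (LEval hx (T a))
      rw [conj_T_all conj hconjT, leval_T, leval_T, map_zpow₀, hxc]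
      rw [zpow_neg, inv_zpow]
  exact RingHom.congr_fun key f
end ConjSection

/-! ### The real quadratic field ℚ(√5) inside ℂ -/

noncomputable abbrev sC : ℂ := ((Real.sqrt 5 : ℝ) : ℂ)
noncomputable abbrev KK : Subalgebra ℚ ℂ := Algebra.adjoin ℚ ({sC} : Set ℂ)

lemma sC_sq : sC ^ 2 = 5 := by
  have : (Real.sqrt 5) ^ 2 = 5 := Real.sq_sqrt (by norm_num)
  calc sC ^ 2 = ((Real.sqrt 5 ^ 2 : ℝ) : ℂ) := by push_cast; ring
  _ = 5 := by rw [this]; norm_num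

lemma irr5 : Irrational (Real.sqrt 5) := (Nat.prime_five).irrational_sqrt

lemma rat_indep (a b : ℚ) (h : (a : ℂ) + (b : ℂ) * sC = 0) : a = 0 ∧ b = 0 := by
  have hre : (a : ℝ) + (b : ℝ) * Real.sqrt 5 = 0 := by
    have := congrArg Complex.re h
    simpa using this
  have hb : b = 0 := by
    by_contra hb
    have : Real.sqrt 5 = ((-a / b : ℚ) : ℝ) := by
      push_cast
      field_simp
      nlinarith [hre]
    exact irr5 ⟨(-a/b : ℚ), this.symm⟩
  refine ⟨?_, hb⟩
  rw [hb] at hre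
  exact_mod_cast by simpa using hre

lemma mem_KK_repr {z : ℂ} (hz : z ∈ KK) : ∃ a b : ℚ, z = (a : ℂ) + (b : ℂ) * sC := by
  induction hz using Algebra.adjoin_induction with
  | mem x hx =>
      rw [Set.mem_singleton_iff] at hx
      exact ⟨0, 1, by simp [hx]⟩
  | algebraMap r => exact ⟨r, 0, by simp⟩
  | add x y _ _ hx hy =>
      obtain ⟨a, b, rfl⟩ := hx
      obtain ⟨c, d, rfl⟩ := hy
      exact ⟨a + c, b + d, by push_cast; ring⟩
  | mul x y _ _ hx hy =>
      obtain ⟨a, b, rfl⟩ := hx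
      obtain ⟨c, d, rfl⟩ := hy
      refine ⟨a * c + 5 * b * d, a * d + b * c, ?_⟩
      push_cast
      linear_combination (b : ℂ) * (d : ℂ) * sC_sq

lemma sC_mem : sC ∈ KK := Algebra.subset_adjoin (Set.mem_singleton _)

lemma rat_mem_KK (a : ℚ) : ((a : ℂ)) ∈ KK := by
  have : (a : ℂ) = algebraMap ℚ ℂ a := by norm_num
  rw [this]; exact Subalgebra.algebraMap_mem _ _

lemma comb_mem_KK (a b : ℚ) : ((a : ℂ) + (b : ℂ) * sC) ∈ KK :=
  KK.add_mem (rat_mem_KK a) (KK.mul_mem (rat_mem_KK b) sC_mem)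

lemma no_sq_305 : ∀ q : ℚ, q ^ 2 ≠ 305 := by
  intro q hq
  have h1 : Irrational (Real.sqrt ((305 : ℕ) : ℝ)) := by
    rw [irrational_sqrt_natCast_iff]
    rintro ⟨r, hr⟩
    have : r ≤ 17 := by nlinarith
    interval_cases r <;> omega
  have h2 : ((q : ℝ)) ^ 2 = ((305 : ℕ) : ℝ) := by exact_mod_cast congrArg (Rat.cast : ℚ → ℝ) hq
  have h3 : Real.sqrt ((305 : ℕ) : ℝ) = |(q : ℝ)| := by
    rw [← h2, Real.sqrt_sq_eq_abs]
  rw [h3] at h1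
  exact h1 ⟨|q|, by push_cast; rfl⟩

lemma KK_im {z : ℂ} (hz : z ∈ KK) : z.im = 0 := by
  obtain ⟨a, b, rfl⟩ := mem_KK_repr hz
  simp

noncomputable abbrev phiC : ℂ := (((1 + Real.sqrt 5) / 2 : ℝ) : ℂ)

lemma phiC_eq : phiC = (1 + sC) / 2 := by push_cast; ring

lemma phiC_mem : phiC ∈ KK := by
  obtain ⟨w, hw, hw2⟩ : ∃ w ∈ KK, w = (1 + sC)/2 := by
    refine ⟨((1/2 : ℚ) : ℂ) + ((1/2 : ℚ) : ℂ) * sC, comb_mem_KK _ _, ?_⟩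
    push_cast; ring
  rw [phiC_eq, ← hw2]; exact hw

lemma phiC_sq : phiC ^ 2 = phiC + 1 := by
  rw [phiC_eq]
  linear_combination (1/4 : ℂ) * sC_sq

lemma no_sqrt_18 : ¬ ∃ w : ℂ, w ∈ KK ∧ w ^ 2 = 18 - phiC := by
  rintro ⟨w, hwK, hw2⟩
  obtain ⟨a, b, rfl⟩ := mem_KK_repr hwK
  rw [phiC_eq] at hw2
  have key : ((a^2 + 5*b^2 - 35/2 : ℚ) : ℂ) + ((2*a*b + 1/2 : ℚ) : ℂ) * sC = 0 := by
    push_cast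
    linear_combination hw2 - (b:ℂ)^2 * sC_sq
  obtain ⟨h1, h2⟩ := rat_indep _ _ key
  exact no_sq_305 (a^2 - 5*b^2) (by linear_combination (a^2+5*b^2+35/2)*h1 - 5*(2*a*b - 1/2)*h2)

lemma KK_inv {z : ℂ} (hz : z ∈ KK) (h0 : z ≠ 0) : ∃ w ∈ KK, z * w = 1 := by
  obtain ⟨a, b, rfl⟩ := mem_KK_repr hz
  have hab : (a^2 - 5*b^2 : ℚ) ≠ 0 := by
    intro h
    by_cases hb : b = 0
    · have ha : a = 0 := by
        rw [hb] at h
        nlinarith [sq_nonneg a]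
      apply h0
      rw [ha, hb]
      norm_num
    · have hR : (a:ℝ)^2 - 5*(b:ℝ)^2 = 0 := by exact_mod_cast congrArg (Rat.cast : ℚ → ℝ) h
      have hbR : (b:ℝ) ≠ 0 := by exact_mod_cast hb
      have hq : ((a/b : ℚ) : ℝ)^2 = 5 := by
        push_cast
        field_simp
        linarith
      have heq : Real.sqrt 5 = |((a/b : ℚ) : ℝ)| := by
        rw [← hq, Real.sqrt_sq_eq_abs]
      have hirr := irr5
      rw [heq] at hirr
      exact hirr ⟨|a/b|, by push_cast; rfl⟩
  set D : ℚ := a^2 - 5*b^2 with hD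
  have hDC : ((D : ℚ) : ℂ) ≠ 0 := by exact_mod_cast hab
  refine ⟨((D⁻¹ * a : ℚ) : ℂ) + ((D⁻¹ * (-b) : ℚ) : ℂ) * sC, comb_mem_KK _ _, ?_⟩
  have h1 : ((a:ℂ) + b * sC) * ((a:ℂ) - b * sC) = ((D:ℚ) : ℂ) := by
    rw [hD]
    push_cast
    linear_combination (-(b:ℂ)^2) * sC_sq
  have h2 : ((a:ℂ) + b * sC) * (((D⁻¹ * a : ℚ) : ℂ) + ((D⁻¹ * (-b) : ℚ) : ℂ) * sC)
      = ((D⁻¹ : ℚ) : ℂ) * (((a:ℂ) + b * sC) * ((a:ℂ) - b * sC)) := by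
    push_cast
    ring
  rw [h2, h1, ← Complex.ofReal_ratCast, ← Complex.ofReal_ratCast, ← Complex.ofReal_mul]
  rw [show ((D⁻¹ : ℚ) : ℝ) * ((D : ℚ) : ℝ) = ((D⁻¹ * D : ℚ) : ℝ) by push_cast; ring]
  rw [inv_mul_cancel₀ hab]
  norm_num

/-! ### Numerics: the non-real root of the quartic on the unit circle -/

noncomputable abbrev phiR : ℝ := (1 + Real.sqrt 5) / 2
noncomputable abbrev r18 : ℝ := Real.sqrt (18 - phiR)
noncomputable abbrev y2R : ℝ := (phiR + 1 - r18) / 2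
noncomputable abbrev tR : ℝ := Real.sqrt (4 - y2R ^ 2)
noncomputable abbrev y1R : ℝ := (phiR + 1 + r18) / 2
noncomputable abbrev x2 : ℂ := (((y2R : ℝ) : ℂ) + ((tR : ℝ) : ℂ) * Complex.I) / 2

lemma h5sq : Real.sqrt 5 ^ 2 = 5 := Real.sq_sqrt (by norm_num)
lemma h5l : 2.23 < Real.sqrt 5 := by nlinarith [h5sq, Real.sqrt_nonneg 5]
lemma h5u : Real.sqrt 5 < 2.24 := by nlinarith [h5sq, Real.sqrt_nonneg 5]
lemma hphisqR : phiR ^ 2 = phiR + 1 := by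
  unfold phiR
  linear_combination (1/4 : ℝ) * h5sq
lemma hr18sq : r18 ^ 2 = 18 - phiR := Real.sq_sqrt (by unfold phiR; nlinarith [h5u])
lemma hr18l : 4.04 < r18 := by
  have h1 := hr18sq
  have h2 := Real.sqrt_nonneg (18 - phiR)
  unfold r18 phiR at *
  nlinarith [h5l, h5u]
lemma hr18u : r18 < 4.05 := by
  have h1 := hr18sq
  have h2 := Real.sqrt_nonneg (18 - phiR)
  unfold r18 phiR at *
  nlinarith [h5l, h5u]
lemma hy2l : -1 < y2R := by
  have := hr18u
  have h2 := Real.sqrt_nonneg (18 - phiR)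
  unfold y2R r18 phiR at *
  nlinarith [h5l, h5u]
lemma hy2u : y2R < 0 := by
  have := hr18l
  unfold y2R r18 phiR at *
  nlinarith [h5l, h5u]
lemma hy2sq4 : y2R ^ 2 < 4 := by nlinarith [hy2l, hy2u]
lemma htsq : tR ^ 2 = 4 - y2R ^ 2 := Real.sq_sqrt (by nlinarith [hy2sq4])
lemma htpos : 0 < tR := Real.sqrt_pos.mpr (by nlinarith [hy2sq4])
lemma hresR : y2R ^ 2 - (phiR + 1) * y2R + (phiR - 4) = 0 := by
  unfold y2R
  linear_combination (1/4 : ℝ) * hr18sq - (1/4 : ℝ) * hphisqR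
lemma hprodR : y1R * y2R = phiR - 4 := by
  unfold y1R y2R
  linear_combination (-1/4 : ℝ) * hr18sq + (1/4 : ℝ) * hphisqR
lemma hsumR : y1R + y2R = phiR + 1 := by unfold y1R y2R; ring

lemma htsqC : ((tR : ℝ) : ℂ) ^ 2 = 4 - ((y2R : ℝ) : ℂ) ^ 2 := by
  rw [show ((4 : ℂ) - ((y2R : ℝ) : ℂ)^2) = (((4 - y2R^2 : ℝ)) : ℂ) by push_cast; ring]
  rw [← htsq]
  push_cast
  ring

lemma hx2root : x2 ^ 2 - ((y2R : ℝ) : ℂ) * x2 + 1 = 0 := by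
  unfold x2
  linear_combination (-1/4 : ℂ) * htsqC + (((tR : ℝ) : ℂ)^2 / 4) * Complex.I_sq

lemma hx2conj : (starRingEnd ℂ) x2 = (((y2R : ℝ) : ℂ) - ((tR : ℝ) : ℂ) * Complex.I) / 2 := by
  unfold x2
  rw [map_div₀, map_add, map_mul, Complex.conj_ofReal, Complex.conj_ofReal, Complex.conj_I,
    map_ofNat]
  ring

lemma hx2ne : (starRingEnd ℂ) x2 ≠ x2 := by
  rw [hx2conj]
  intro h
  have := congrArg Complex.im h
  simp [x2, Complex.div_im] at this
  nlinarith [htpos, this]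

lemma hx2sum : x2 + (starRingEnd ℂ) x2 = ((y2R : ℝ) : ℂ) := by
  rw [hx2conj]; unfold x2; ring

noncomputable abbrev y2C : ℂ := ((y2R : ℝ) : ℂ)
noncomputable abbrev y1C : ℂ := ((y1R : ℝ) : ℂ)

lemma hresC : y2C ^ 2 - (phiC + 1) * y2C + (phiC - 4) = 0 := by
  have := hresR
  have hcast : (((y2R ^ 2 - (phiR + 1) * y2R + (phiR - 4) : ℝ)) : ℂ) = 0 := by
    rw [this]; norm_num
  rw [← hcast]
  push_cast
  ring

lemma hsumC : y1C + y2C = phiC + 1 := by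
  have := hsumR
  rw [show phiC + 1 = (((phiR + 1 : ℝ)) : ℂ) by push_cast; ring, ← this]
  push_cast
  ring

lemma hprodC : y1C * y2C = phiC - 4 := by
  have := hprodR
  rw [show phiC - 4 = (((phiR - 4 : ℝ)) : ℂ) by push_cast; ring, ← this]
  push_cast
  ring

lemma quad_eq {R : Type*} [CommRing R] {p : R[X]} (hm : p.Monic) (h2 : p.natDegree = 2) :
    p = X ^ 2 + Polynomial.C (p.coeff 1) * X + Polynomial.C (p.coeff 0) := by
  ext n
  rcases n with _ | _ | _ | n
  · simp
  · simp [coeff_one, coeff_X]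
  · have : p.coeff 2 = 1 := by
      have := hm.leadingCoeff
      rwa [Polynomial.leadingCoeff, h2] at this
    simp [this, coeff_X]
  · have hz : p.coeff (n + 3) = 0 := by
      apply Polynomial.coeff_eq_zero_of_natDegree_lt
      omega
    simp [hz, Polynomial.coeff_X_pow, Polynomial.coeff_X]

lemma zeta_sum (ζ : ℂ) (hζ : ζ = Complex.exp (2 * Real.pi * Complex.I / 5)) :
    ζ ^ 2 + ζ ^ 3 = ((-((1 + Real.sqrt 5) / 2) : ℝ) : ℂ) := by
  have h2 : ζ ^ 2 = Complex.exp (((4 * Real.pi / 5 : ℝ) : ℂ) * Complex.I) := by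
    rw [hζ, ← Complex.exp_nat_mul]
    congr 1
    push_cast
    ring
  have h3 : ζ ^ 3 = Complex.exp (((6 * Real.pi / 5 : ℝ) : ℂ) * Complex.I) := by
    rw [hζ, ← Complex.exp_nat_mul]
    congr 1
    push_cast
    ring
  rw [h2, h3, Complex.exp_mul_I, Complex.exp_mul_I, ← Complex.ofReal_cos, ← Complex.ofReal_sin,
    ← Complex.ofReal_cos, ← Complex.ofReal_sin]
  have e1 : (6 * Real.pi / 5) = 2 * Real.pi - 4 * Real.pi / 5 := by ring
  have e2 : (4 * Real.pi / 5) = Real.pi - Real.pi / 5 := by ring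
  rw [e1, Real.cos_two_pi_sub, Real.sin_two_pi_sub, e2, Real.cos_pi_sub, Real.cos_pi_div_five]
  push_cast
  ring

end Aux

set_option maxHeartbeats 2000000 in
set_option synthInstance.maxHeartbeats 1000000 in
/-- The polynomial `p(t) = t^4 + (ζ²+ζ³−1)t³ + (−2−ζ²−ζ³)t² + (ζ²+ζ³−1)t + 1` with
`ζ = e^{2πi/5}` has coefficients in `Z[(1+√5)/2]`, is irreducible over `Q(√5)`, and is not
a norm `λ t^k f(t) f̄(t)` over `Q(ζ_5)` (involution `t ↦ t⁻¹`, `ζ_5 ↦ ζ_5⁻¹`, i.e. complex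
conjugation on coefficients). -/
theorem stmt16 (ζ : ℂ) (hζ : ζ = Complex.exp (2 * Real.pi * Complex.I / 5))
    (P : Polynomial ℂ)
    (hP : P = X ^ 4 + Polynomial.C (ζ ^ 2 + ζ ^ 3 - 1) * X ^ 3 + Polynomial.C (-2 - ζ ^ 2 - ζ ^ 3) * X ^ 2 +
      Polynomial.C (ζ ^ 2 + ζ ^ 3 - 1) * X + 1)
    (conj : LaurentPolynomial ℂ ≃+* LaurentPolynomial ℂ)
    (hconjC : ∀ a : ℂ, conj (LaurentPolynomial.C a) =
      LaurentPolynomial.C (starRingEnd ℂ a))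
    (hconjT : conj (T 1) = T (-1)) :
    (∀ n : ℕ, P.coeff n ∈
      Algebra.adjoin ℤ ({(((1 + Real.sqrt 5) / 2 : ℝ) : ℂ)} : Set ℂ)) ∧
    (∃ g : Polynomial (Algebra.adjoin ℚ ({((Real.sqrt 5 : ℝ) : ℂ)} : Set ℂ)),
      g.map (algebraMap (Algebra.adjoin ℚ ({((Real.sqrt 5 : ℝ) : ℂ)} : Set ℂ)) ℂ) = P ∧
      Irreducible g) ∧
    ¬ ∃ (lam : ℂ) (k : ℤ) (f : LaurentPolynomial ℂ),
        lam ∈ Algebra.adjoin ℚ ({ζ} : Set ℂ) ∧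
        (∀ n : ℤ, f.coeff n ∈ Algebra.adjoin ℚ ({ζ} : Set ℂ)) ∧
        P.toLaurent = LaurentPolynomial.C lam * T k * f * conj f := by
  have hv : ζ ^ 2 + ζ ^ 3 = -phiC := by
    rw [zeta_sum ζ hζ]
    push_cast
    ring
  have e1 : ζ ^ 2 + ζ ^ 3 - 1 = -phiC - 1 := by rw [hv]
  have e2 : -2 - ζ ^ 2 - ζ ^ 3 = phiC - 2 := by linear_combination -hv
  have hP' : P = X ^ 4 + Polynomial.C (-phiC - 1) * X ^ 3 + Polynomial.C (phiC - 2) * X ^ 2 +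
      Polynomial.C (-phiC - 1) * X + 1 := by rw [hP, e1, e2]
  refine ⟨?_, ?_, ?_⟩
  · -- part 1: coefficients in ℤ[(1+√5)/2]
    intro n
    set A := Algebra.adjoin ℤ ({phiC} : Set ℂ) with hA
    have hm0 : phiC ∈ A := Algebra.subset_adjoin (Set.mem_singleton _)
    have hm : (1 + (sC : ℂ)) / 2 ∈ A := by rw [← phiC_eq]; exact hm0
    have h2m : (2 : ℂ) ∈ A := by
      have := A.one_mem
      have h2 : (2 : ℂ) = 1 + 1 := by norm_num
      rw [h2]
      exact A.add_mem this this
    rw [hP']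
    rcases n with _ | _ | _ | _ | _ | n
    · simp only [coeff_add, coeff_one, coeff_X, coeff_X_pow, coeff_C_mul]
      norm_num
    · simp only [coeff_add, coeff_one, coeff_X, coeff_X_pow, coeff_C_mul]
      norm_num
      exact A.sub_mem (A.neg_mem hm) A.one_mem
    · simp only [coeff_add, coeff_one, coeff_X, coeff_X_pow, coeff_C_mul]
      norm_num
      exact A.sub_mem hm h2m
    · simp only [coeff_add, coeff_one, coeff_X, coeff_X_pow, coeff_C_mul]
      norm_num
      exact A.sub_mem (A.neg_mem hm) A.one_mem
    · simp only [coeff_add, coeff_one, coeff_X, coeff_X_pow, coeff_C_mul]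
      norm_num
    · simp only [coeff_add, coeff_one, coeff_X, coeff_X_pow, coeff_C_mul]
      norm_num
      rw [if_neg (by omega), if_neg (by omega), if_neg (by omega)]
      simpa using A.zero_mem
  · -- part 2: irreducibility over ℚ(√5)
    have hc3mem : (-phiC - 1) ∈ KK := KK.sub_mem (KK.neg_mem phiC_mem) KK.one_mem
    have hc2mem : (phiC - 2) ∈ KK := KK.sub_mem phiC_mem (by
      have := KK.one_mem
      rw [show (2 : ℂ) = 1 + 1 by norm_num]
      exact KK.add_mem this this)
    set c3K : ↥KK := ⟨-phiC - 1, hc3mem⟩ with hc3K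
    set c2K : ↥KK := ⟨phiC - 2, hc2mem⟩ with hc2K
    set g : Polynomial ↥KK := X ^ 4 + Polynomial.C c3K * X ^ 3 + Polynomial.C c2K * X ^ 2 +
      Polynomial.C c3K * X + 1 with hg
    have hval : ∀ z : ↥KK, algebraMap ↥KK ℂ z = z.1 := fun z => rfl
    have hgmap : g.map (algebraMap ↥KK ℂ) = P := by
      rw [hP', hg]
      simp only [Polynomial.map_add, Polynomial.map_mul, Polynomial.map_pow, Polynomial.map_X,
        Polynomial.map_C, Polynomial.map_one, hval]
      rfl
    have hg4 : g.natDegree = 4 := by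
      rw [hg]
      compute_degree!
    have hgm : g.Monic := by
      rw [hg]
      monicity!
    have hg1 : g ≠ 1 := by
      intro h
      rw [h] at hg4
      simp at hg4
    refine ⟨g, hgmap, ?_⟩
    rw [hgm.irreducible_iff_lt_natDegree_lt hg1]
    intro q hqm hqd hqdvd
    rw [Finset.mem_Ioc, hg4] at hqd
    obtain ⟨h, hh⟩ := hqdvd
    -- the key fact : some element of KK squares to 18 - phiC , contradiction
    apply no_sqrt_18
    have hdeg : q.natDegree = 1 ∨ q.natDegree = 2 := by omega
    rcases hdeg with hdeg | hdeg
    · -- linear factor : real root in KK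
      have hqx : q = X + Polynomial.C (q.coeff 0) := hqm.eq_X_add_C hdeg
      set x : ↥KK := -q.coeff 0 with hx
      have hqe : q.eval x = 0 := by rw [hqx]; simp [hx]
      have hge : g.eval x = 0 := by rw [hh, eval_mul, hqe, zero_mul]
      have hgeK : x ^ 4 + c3K * x ^ 3 + c2K * x ^ 2 + c3K * x + 1 = 0 := by
        rw [hg] at hge
        simpa using hge
      set XC : ℂ := (x : ℂ) with hXC
      have hc3v : algebraMap ↥KK ℂ c3K = -phiC - 1 := rfl
      have hc2v : algebraMap ↥KK ℂ c2K = phiC - 2 := rfl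
      have hxv : algebraMap ↥KK ℂ x = XC := rfl
      have E : XC ^ 4 + (-phiC - 1) * XC ^ 3 + (phiC - 2) * XC ^ 2 + (-phiC - 1) * XC + 1 = 0 := by
        have h0 := congrArg (algebraMap ↥KK ℂ) hgeK
        simp only [map_add, map_mul, map_pow, map_one, map_zero, hc3v, hc2v, hxv] at h0
        exact h0
      have hX0 : XC ≠ 0 := by
        intro h0
        rw [h0] at E
        norm_num at E
      obtain ⟨w, hwK, hwinv⟩ := KK_inv x.2 (by rwa [← hXC])
      set Y : ℂ := XC + w with hY
      have h1 : XC ^ 2 * (Y ^ 2 - (phiC + 1) * Y + (phiC - 4)) = 0 := by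
        rw [hY]
        linear_combination E + (2*XC^2 + XC*w + 1 - (phiC+1)*XC) * hwinv
      have hYres : Y ^ 2 - (phiC + 1) * Y + (phiC - 4) = 0 := by
        rcases mul_eq_zero.mp h1 with h | h
        · exact absurd h (pow_ne_zero 2 hX0)
        · exact h
      refine ⟨2 * Y - (phiC + 1), ?_, ?_⟩
      · have hYK : Y ∈ KK := KK.add_mem x.2 hwK
        have : 2 * Y - (phiC + 1) = (Y + Y) - (phiC + 1) := by ring
        rw [this]
        exact KK.sub_mem (KK.add_mem hYK hYK) (KK.add_mem phiC_mem KK.one_mem)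
      · linear_combination 4 * hYres + phiC_sq
    · -- quadratic factor : x2 is a root of one of the two factors
      have hhm : h.Monic := hqm.of_mul_monic_left (hh ▸ hgm)
      have hh2 : h.natDegree = 2 := by
        have hnm := hqm.natDegree_mul hhm
        rw [← hh, hg4] at hnm
        omega
      have hPfac : P = q.map (algebraMap ↥KK ℂ) * h.map (algebraMap ↥KK ℂ) := by
        rw [← hgmap, hh, Polynomial.map_mul]
      have hPx2 : P.eval x2 = 0 := by
        have hexp : P.eval x2 = (x2 ^ 2 - y1C * x2 + 1) * (x2 ^ 2 - y2C * x2 + 1) := by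
          rw [hP']
          simp only [eval_add, eval_mul, eval_pow, eval_X, eval_C, eval_one]
          linear_combination (x2^3 + x2) * hsumC - x2^2 * hprodC
        rw [hexp, hx2root, mul_zero]
      have key : ∀ u : Polynomial ↥KK, u.Monic → u.natDegree = 2 →
          (u.map (algebraMap ↥KK ℂ)).eval x2 = 0 →
          ∃ w, w ∈ KK ∧ w ^ 2 = 18 - phiC := by
        intro u hum hu2 hux
        have hq2 := quad_eq hum hu2
        set α : ℂ := (u.coeff 1 : ℂ) with hα
        set β : ℂ := (u.coeff 0 : ℂ) with hβ
        have hux' : x2 ^ 2 + α * x2 + β = 0 := by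
          rw [hq2] at hux
          simp only [Polynomial.map_add, Polynomial.map_mul, Polynomial.map_pow,
            Polynomial.map_X, Polynomial.map_C, eval_add, eval_mul, eval_pow, eval_X,
            eval_C, hval] at hux
          exact hux
        have hαre : (starRingEnd ℂ) α = α := by
          rw [Complex.conj_eq_iff_im]
          exact KK_im (u.coeff 1).2
        have hβre : (starRingEnd ℂ) β = β := by
          rw [Complex.conj_eq_iff_im]
          exact KK_im (u.coeff 0).2
        have E' : (starRingEnd ℂ) x2 ^ 2 + α * (starRingEnd ℂ) x2 + β = 0 := by
          have := congrArg (starRingEnd ℂ) hux'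
          simpa [map_add, map_mul, map_pow, hαre, hβre] using this
        have hfac : (x2 - (starRingEnd ℂ) x2) * (x2 + (starRingEnd ℂ) x2 + α) = 0 := by
          linear_combination hux' - E'
        have hsum0 : x2 + (starRingEnd ℂ) x2 + α = 0 := by
          rcases mul_eq_zero.mp hfac with hcc | hcc
          · exact absurd (sub_eq_zero.mp hcc).symm hx2ne
          · exact hcc
        have hαval : α = -y2C := by
          linear_combination hsum0 - hx2sum
        refine ⟨-(2 * α + phiC + 1), ?_, ?_⟩
        · have hαK : α ∈ KK := (u.coeff 1).2
          have : -(2 * α + phiC + 1) = -((α + α) + phiC + 1) := by ring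
          rw [this]
          exact KK.neg_mem (KK.add_mem (KK.add_mem (KK.add_mem hαK hαK) phiC_mem) KK.one_mem)
        · rw [hαval]
          linear_combination 4 * hresC + phiC_sq
      have := hPfac ▸ hPx2
      rw [eval_mul] at this
      rcases mul_eq_zero.mp this with hcase | hcase
      · exact key q hqm hdeg hcase
      · exact key h hhm hh2 hcase
  · -- part 3: not a norm
    rintro ⟨lam, k, f, -, -, hfac⟩
    have h1ne : (1 : ℂ) ≠ 0 := one_ne_zero
    have hm1ne : (-1 : ℂ) ≠ 0 := by norm_num
    have hIne : Complex.I ≠ 0 := Complex.I_ne_zero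
    have hc1 : starRingEnd ℂ (1 : ℂ) = (1 : ℂ)⁻¹ := by norm_num
    have hcm1 : starRingEnd ℂ (-1 : ℂ) = (-1 : ℂ)⁻¹ := by norm_num
    have hcI : starRingEnd ℂ Complex.I = Complex.I⁻¹ := by
      rw [Complex.inv_I, Complex.conj_I]
    have hPe1 : P.eval 1 = -phiC - 2 := by
      rw [hP']
      simp only [eval_add, eval_mul, eval_pow, eval_X, eval_C, eval_one, one_pow, mul_one]
      ring
    have hPem1 : P.eval (-1) = 3 * phiC + 2 := by
      rw [hP']
      simp only [eval_add, eval_mul, eval_pow, eval_X, eval_C, eval_one, eval_neg]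
      ring
    have hPeI : P.eval Complex.I = 4 - phiC := by
      rw [hP']
      simp only [eval_add, eval_mul, eval_pow, eval_X, eval_C, eval_one]
      linear_combination (Complex.I ^ 2 + (-phiC - 1) * Complex.I + (phiC - 3)) * Complex.I_sq
    have hEval : ∀ (u : ℂ) (hu : u ≠ 0), starRingEnd ℂ u = u⁻¹ →
        P.eval u = lam * u ^ k * ((Complex.normSq (LEval hu f) : ℝ) : ℂ) := by
      intro u hu huc
      have h0 := congrArg (LEval hu) hfac
      rw [leval_toLaurent, map_mul, map_mul, map_mul, leval_C, leval_T,
        leval_conj conj hconjC hconjT hu huc, mul_assoc (lam * u ^ k),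
        Complex.mul_conj] at h0
      exact h0
    set n1 : ℝ := Complex.normSq (LEval h1ne f) with hn1def
    set n2 : ℝ := Complex.normSq (LEval hm1ne f) with hn2def
    set n3 : ℝ := Complex.normSq (LEval hIne f) with hn3def
    have E1 : -phiC - 2 = lam * ((n1 : ℝ) : ℂ) := by
      have := hEval 1 h1ne hc1
      rw [hPe1, one_zpow, mul_one] at this
      exact this
    have E2 : 3 * phiC + 2 = lam * (-1 : ℂ) ^ k * ((n2 : ℝ) : ℂ) := by
      have := hEval (-1) hm1ne hcm1
      rw [hPem1] at this
      exact this
    have E3 : 4 - phiC = lam * Complex.I ^ k * ((n3 : ℝ) : ℂ) := by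
      have := hEval Complex.I hIne hcI
      rw [hPeI] at this
      exact this
    -- extract real information
    have hre1 : -phiR - 2 = lam.re * n1 := by
      have := congrArg Complex.re E1
      simpa [Complex.mul_re] using this
    have him1 : 0 = lam.im * n1 := by
      have := congrArg Complex.im E1
      simpa [Complex.mul_im] using this
    have hphiRpos : 0 < phiR := by unfold phiR; nlinarith [h5l]
    have hphiRlt : phiR < 2 := by unfold phiR; nlinarith [h5u]
    have hn1ne : n1 ≠ 0 := by
      intro h0
      rw [h0, mul_zero] at hre1
      nlinarith [hphiRpos]
    have hn1pos : 0 < n1 := lt_of_le_of_ne (Complex.normSq_nonneg _) (Ne.symm hn1ne)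
    have hlamim : lam.im = 0 := by
      rcases mul_eq_zero.mp him1.symm with h0 | h0
      · exact h0
      · exact absurd h0 hn1ne
    have hlamreneg : lam.re < 0 := by nlinarith [hre1, hn1pos, hphiRpos]
    have hlam : lam = ((lam.re : ℝ) : ℂ) := by
      apply Complex.ext <;> simp [hlamim]
    have hn3ne : n3 ≠ 0 := by
      intro h0
      rw [h0] at E3
      have := congrArg Complex.re E3
      simp at this
      nlinarith [h5u, this]
    -- k must be even
    have hIkim : (Complex.I ^ k).im = 0 := by
      have him3 := congrArg Complex.im E3
      rw [hlam] at him3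
      have hcomp : (((lam.re : ℝ) : ℂ) * Complex.I ^ k * ((n3 : ℝ) : ℂ)).im
          = lam.re * n3 * (Complex.I ^ k).im := by
        simp [Complex.mul_im, Complex.mul_re]
        ring
      rw [hcomp] at him3
      have hlhs : ((4 : ℂ) - phiC).im = 0 := by simp
      rw [hlhs] at him3
      rcases mul_eq_zero.mp him3.symm with h0 | h0
      · rcases mul_eq_zero.mp h0 with h0' | h0'
        · exact absurd h0' (ne_of_lt hlamreneg)
        · exact absurd h0' hn3ne
      · exact h0
    have hkeven : Even k := by
      by_contra hodd
      obtain ⟨m, hm⟩ := Int.not_even_iff_odd.mp hodd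
      have hI2 : Complex.I ^ (2 : ℤ) = -1 := by
        rw [show (2 : ℤ) = ((2 : ℕ) : ℤ) from rfl, zpow_natCast]
        exact Complex.I_sq
      have hIk : Complex.I ^ k = (-1 : ℂ) ^ m * Complex.I := by
        rw [hm, zpow_add_one₀ hIne, zpow_mul, hI2]
      have hro : ((-1 : ℂ)) ^ m = (((-1 : ℝ) ^ m : ℝ) : ℂ) := by
        rw [Complex.ofReal_zpow]
        norm_num
      rw [hIk, hro] at hIkim
      simp only [Complex.mul_im, Complex.ofReal_re, Complex.ofReal_im, Complex.I_re,
        Complex.I_im, mul_one, mul_zero, zero_mul, add_zero, zero_add] at hIkim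
      exact zpow_ne_zero m (by norm_num : (-1 : ℝ) ≠ 0) hIkim
    -- contradiction with the sign at -1
    have hneg1 : (-1 : ℂ) ^ k = 1 := Even.neg_one_zpow hkeven
    rw [hneg1, mul_one] at E2
    have hre2 : 3 * phiR + 2 = lam.re * n2 := by
      have := congrArg Complex.re E2
      simpa [Complex.mul_re] using this
    nlinarith [hre2, hlamreneg, Complex.normSq_nonneg (LEval hm1ne f), hphiRpos]
end

section
/- The polynomial 3t^2 + 5t + 3 is irreducible over Q(ζ_3), where ζ_3 is a primitive cube root of unity. Consequently, (t−1)^2 (3t^2 + 5t + 3) is not of the form λ t^k f(t) \overline{f(t)} in Q(ζ_3)[t, t^{-1}], where the involution sends t to t^{-1} and ζ_3 to ζ_3^{-1}. -/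
open Polynomial LaurentPolynomial

noncomputable abbrev K3 := CyclotomicField 3 ℚ



-- spanning
lemma span_zeta (ζ : K3) (hζ : IsPrimitiveRoot ζ 3) (x : K3) :
    ∃ a b : ℚ, x = algebraMap ℚ K3 a + algebraMap ℚ K3 b * ζ := by
  have hsq : ζ ^ 2 = -1 - ζ := by
    have := hζ.geom_sum_eq_zero (by norm_num)
    rw [Finset.sum_range_succ, Finset.sum_range_succ, Finset.sum_range_one] at this
    simp only [pow_zero, pow_one] at this
    linear_combination this
  let S : Subalgebra ℚ K3 :=
    { carrier := {x | ∃ a b : ℚ, x = algebraMap ℚ K3 a + algebraMap ℚ K3 b * ζ}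
      mul_mem' := by
        rintro u v ⟨a, b, rfl⟩ ⟨c, d, rfl⟩
        refine ⟨a * c - b * d, a * d + b * c - b * d, ?_⟩
        push_cast
        linear_combination (algebraMap ℚ K3 b * algebraMap ℚ K3 d) * hsq
      add_mem' := by
        rintro u v ⟨a, b, rfl⟩ ⟨c, d, rfl⟩
        exact ⟨a + c, b + d, by push_cast; ring⟩
      algebraMap_mem' := fun r => ⟨r, 0, by push_cast; ring⟩ }
  have hζS : ζ ∈ S := ⟨0, 1, by push_cast; ring⟩
  have htop : Algebra.adjoin ℚ ({ζ} : Set K3) = ⊤ :=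
    by haveI : NeZero ((3:ℕ) : ℚ) := ⟨by norm_num⟩; haveI : IsCyclotomicExtension {3} ℚ K3 := CyclotomicField.isCyclotomicExtension (n := 3) (K := ℚ); exact IsCyclotomicExtension.adjoin_primitive_root_eq_top (n := 3) hζ
  have hx : x ∈ S := by
    have hle : (⊤ : Subalgebra ℚ K3) ≤ S := by
      rw [← htop]
      exact Algebra.adjoin_le (by simpa using hζS)
    exact hle trivial
  exact hx

-- independence
lemma indep_zeta (ζ : K3) (hζ : IsPrimitiveRoot ζ 3) (a b : ℚ)
    (h : algebraMap ℚ K3 a + algebraMap ℚ K3 b * ζ = 0) : a = 0 ∧ b = 0 := by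
  have hinj : Function.Injective (algebraMap ℚ K3) := (algebraMap ℚ K3).injective
  by_cases hb : b = 0
  · subst hb
    simp only [map_zero, zero_mul, add_zero] at h
    exact ⟨hinj (by simpa using h), rfl⟩
  · exfalso
    have hbne : algebraMap ℚ K3 b ≠ 0 := by
      simpa using fun hc => hb (hinj (by simpa using hc))
    have hzr : ζ = algebraMap ℚ K3 (-a / b) := by
      rw [map_div₀, map_neg, eq_div_iff hbne]
      linear_combination h
    have h3 : ζ ^ 3 = 1 := hζ.pow_eq_one
    rw [hzr, ← map_pow] at h3
    have hq : (-a / b) ^ 3 = 1 := by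
      apply hinj; rw [h3]; simp
    have hr1 : (-a / b) = 1 := by nlinarith [sq_nonneg (-a/b + 1), sq_nonneg (-a/b - 1)]
    rw [hr1] at hzr
    simp only [map_one] at hzr
    exact hζ.ne_one (by norm_num) hzr

lemma aux_int (m n : ℤ) (hco : IsCoprime m n)
    (key : 27 * m ^ 2 + 45 * m * n + 16 * n ^ 2 = 0) : False := by
  have hp3 : Prime (3:ℤ) := Int.prime_three
  have hdvd : ∀ x : ℤ, (3:ℤ) ∣ 16 * x ^ 2 → 3 ∣ x := by
    intro x hx
    rcases hp3.dvd_mul.mp hx with h | h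
    · norm_num at h
    · exact hp3.dvd_of_dvd_pow h
  have h3n : (3:ℤ) ∣ n := hdvd n ⟨-9 * m ^ 2 - 15 * m * n, by linarith⟩
  obtain ⟨n1, rfl⟩ := h3n
  have key1 : 3 * m ^ 2 + 15 * m * n1 + 16 * n1 ^ 2 = 0 := by
    have h9 : (9:ℤ) * (3 * m ^ 2 + 15 * m * n1 + 16 * n1 ^ 2) = 9 * 0 := by linear_combination key
    exact mul_left_cancel₀ (by norm_num) h9
  have h3n1 : (3:ℤ) ∣ n1 := hdvd n1 ⟨-m ^ 2 - 5 * m * n1, by linarith⟩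
  obtain ⟨n2, rfl⟩ := h3n1
  have key2 : m ^ 2 + 15 * m * n2 + 48 * n2 ^ 2 = 0 := by
    have h9 : (3:ℤ) * (m ^ 2 + 15 * m * n2 + 48 * n2 ^ 2) = 3 * 0 := by linear_combination key1
    exact mul_left_cancel₀ (by norm_num) h9
  have h3m : (3:ℤ) ∣ m := by
    have : (3:ℤ) ∣ m ^ 2 := ⟨-5 * m * n2 - 16 * n2 ^ 2, by linarith⟩
    exact hp3.dvd_of_dvd_pow this
  have : IsUnit (3:ℤ) := hco.isUnit_of_dvd' h3m ⟨3 * n2, by ring⟩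
  rw [Int.isUnit_iff] at this
  omega

lemma no_rat_root (a : ℚ) : 27 * a ^ 2 + 45 * a + 16 ≠ 0 := by
  intro h
  have key : 27 * a.num ^ 2 + 45 * a.num * a.den + 16 * (a.den:ℤ) ^ 2 = 0 := by
    have hn : (a.num : ℚ) = a * a.den := by exact_mod_cast (Rat.mul_den_eq_num a).symm
    have h2 : (27 * (a.num:ℚ) ^ 2 + 45 * a.num * a.den + 16 * (a.den:ℚ) ^ 2) = 0 := by
      rw [hn]; linear_combination (a.den:ℚ)^2 * h
    exact_mod_cast h2
  refine aux_int a.num a.den ?_ key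
  rw [Int.isCoprime_iff_gcd_eq_one]
  simpa [Int.gcd] using a.reduced

lemma q_irred (ζ : K3) (hζ : IsPrimitiveRoot ζ 3) :
    Irreducible (Polynomial.C 3 * X ^ 2 + Polynomial.C 5 * X + Polynomial.C 3 : K3[X]) := by
  have h3 : (3 : K3) ≠ 0 := by norm_num
  have hdeg : (Polynomial.C 3 * X ^ 2 + Polynomial.C 5 * X + Polynomial.C 3 : K3[X]).natDegree = 2 :=
    natDegree_quadratic h3
  have hne : (Polynomial.C 3 * X ^ 2 + Polynomial.C 5 * X + Polynomial.C 3 : K3[X]) ≠ 0 := by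
    intro h0; rw [h0] at hdeg; simp at hdeg
  rw [irreducible_iff_roots_eq_zero_of_degree_le_three (by omega) (by omega)]
  rw [Multiset.eq_zero_iff_forall_notMem]
  intro x hx
  rw [mem_roots hne] at hx
  have hev : 3 * x ^ 2 + 5 * x + 3 = 0 := by
    have := hx
    simp only [IsRoot, eval_add, eval_mul, eval_pow, eval_C, eval_X] at this
    linear_combination this
  obtain ⟨a, b, rfl⟩ := span_zeta ζ hζ x
  have hsq : ζ ^ 2 = -1 - ζ := by
    have := hζ.geom_sum_eq_zero (by norm_num)
    rw [Finset.sum_range_succ, Finset.sum_range_succ, Finset.sum_range_one] at this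
    simp only [pow_zero, pow_one] at this
    linear_combination this
  have hcomb : algebraMap ℚ K3 (3*a^2 - 3*b^2 + 5*a + 3)
      + algebraMap ℚ K3 (6*a*b - 3*b^2 + 5*b) * ζ = 0 := by
    simp only [map_add, map_sub, map_mul, map_pow, map_ofNat]
    linear_combination hev + (-3 * algebraMap ℚ K3 b ^ 2) * hsq
  obtain ⟨e1, e2⟩ := indep_zeta ζ hζ _ _ hcomb
  by_cases hb : b = 0
  · rw [hb] at e1; nlinarith [sq_nonneg (6*a + 5), e1]
  · have hlin : 6*a - 3*b + 5 = 0 := by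
      have : b * (6*a - 3*b + 5) = 0 := by linear_combination e2
      rcases mul_eq_zero.mp this with h | h
      · exact absurd h hb
      · exact h
    exact no_rat_root a (by nlinarith [e1, hlin])

lemma part2 (ζ : K3) (hζ : IsPrimitiveRoot ζ 3) (σ : K3 ≃+* K3)
    (conj : LaurentPolynomial K3 ≃+* LaurentPolynomial K3)
    (hconjC : ∀ a, conj (LaurentPolynomial.C a) = LaurentPolynomial.C (σ a))
    (hconjT : conj (T 1) = T (-1)) :
    ¬ ∃ (lam : K3) (k : ℤ) (f : LaurentPolynomial K3),
        ((X - 1) ^ 2 * (Polynomial.C 3 * X ^ 2 + Polynomial.C 5 * X + Polynomial.C 3) :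
            K3[X]).toLaurent =
          LaurentPolynomial.C lam * T k * f * conj f := by
  set q : K3[X] := Polynomial.C 3 * X ^ 2 + Polynomial.C 5 * X + Polynomial.C 3 with hqdef
  have hq_irr := q_irred ζ hζ
  have h3 : (3 : K3) ≠ 0 := by norm_num
  have hqdeg : q.natDegree = 2 := natDegree_quadratic h3
  have hqne : q ≠ 0 := by intro h0; rw [h0] at hqdeg; simp at hqdeg
  have hq_prime : Prime q := hq_irr.prime
  -- q does not divide degree ≤ 1 nonzero polys
  have hnd : ∀ r : K3[X], r ≠ 0 → r.natDegree ≤ 1 → ¬ q ∣ r := by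
    intro r hr hdr hdvd
    have := Polynomial.natDegree_le_of_dvd hdvd hr
    omega
  have hqX : ¬ q ∣ (X : K3[X]) := hnd X X_ne_zero (by simp)
  have hqX1 : ¬ q ∣ (X - 1 : K3[X]) := by
    refine hnd _ ?_ ?_
    · have : (X - 1 : K3[X]) = X - Polynomial.C 1 := by simp
      rw [this]; exact X_sub_C_ne_zero 1
    · have : (X - 1 : K3[X]) = X - Polynomial.C 1 := by simp
      rw [this, natDegree_X_sub_C]
  -- conj on T powers
  have hconjTk : ∀ j : ℤ, conj (T j) = T (-j) := by
    have hTinv : conj (T (-1)) = T 1 := by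
      have h0 : conj (T 1 * T (-1)) = 1 := by
        rw [← T_add]; norm_num [T_zero]
      rw [map_mul, hconjT] at h0
      calc conj (T (-1)) = T 1 * (T (-1) * conj (T (-1))) := by
            rw [← mul_assoc, ← T_add]; norm_num [T_zero]
        _ = T 1 := by rw [h0, mul_one]
    intro j
    induction j using Int.induction_on with
    | zero => simp [T_zero]
    | succ i ih => rw [show ((i:ℤ)+1) = (i+1) by ring, T_add, map_mul, ih, hconjT, ← T_add]; ring_nf
    | pred i ih => rw [show (-(i:ℤ)-1) = (-i) + (-1) by ring, T_add, map_mul, ih, hTinv, ← T_add]; ring_nf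
  -- conj of toLaurent q
  have hconjq : conj (toLaurent q) = toLaurent q * T (-2) := by
    have hq' : toLaurent q = LaurentPolynomial.C 3 * T 2 + LaurentPolynomial.C 5 * T 1
        + LaurentPolynomial.C 3 := by
      rw [hqdef]
      simp only [map_add, map_mul, Polynomial.toLaurent_C, Polynomial.toLaurent_X_pow,
        Polynomial.toLaurent_X]
      norm_num
    have hσ3 : σ (3 : K3) = 3 := by exact map_ofNat σ 3
    have hσ5 : σ (5 : K3) = 5 := by exact map_ofNat σ 5
    rw [hq']
    simp only [map_add, map_mul, hconjC, hσ3, hσ5, hconjTk]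
    have e1 : (T (2:ℤ) * T (-2:ℤ) : LaurentPolynomial K3) = 1 := by rw [← T_add]; norm_num [T_zero]
    have e2 : (T (1:ℤ) * T (-2:ℤ) : LaurentPolynomial K3) = T (-1:ℤ) := by rw [← T_add]; norm_num
    have e3 : (T (-(2:ℤ)) : LaurentPolynomial K3) = T (-2:ℤ) := by norm_num
    have e4 : (T (-(1:ℤ)) : LaurentPolynomial K3) = T (-1:ℤ) := by norm_num
    rw [e3, e4]
    linear_combination (-LaurentPolynomial.C (3:K3)) * e1 + (-LaurentPolynomial.C (5:K3)) * e2
  -- divisibility transfer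
  have hdvd_trans : ∀ r : K3[X], toLaurent q ∣ toLaurent r → q ∣ r := by
    intro r ⟨g, hg⟩
    obtain ⟨u, H, hH⟩ := g.exists_T_pow
    have hinj : r * X ^ u = q * H := by
      apply Polynomial.toLaurent_injective
      rw [map_mul, map_mul, Polynomial.toLaurent_X_pow, hg, hH]
      ring
    rcases (hq_prime.dvd_mul).mp ⟨H, hinj⟩ with h | h
    · exact h
    · exact absurd (hq_prime.dvd_of_dvd_pow h) hqX
  rintro ⟨lam, k, f, heq⟩
  obtain ⟨n, F, hF⟩ := f.exists_T_pow
  obtain ⟨m, G, hG⟩ := (conj f).exists_T_pow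
  set N : ℕ := k.natAbs with hN
  set M : ℕ := (k + N).toNat with hM
  have hkN : k + (N:ℤ) = (M:ℤ) := by omega
  -- main polynomial equation
  have hPX : (X - 1) ^ 2 * q * X ^ (n + m + N) = Polynomial.C lam * X ^ M * F * G := by
    apply Polynomial.toLaurent_injective
    rw [map_mul, heq, map_mul, map_mul, map_mul, Polynomial.toLaurent_X_pow,
      Polynomial.toLaurent_X_pow, Polynomial.toLaurent_C, hF, hG, ← hkN]
    have eT : (T ((n + m + N : ℕ) : ℤ) : LaurentPolynomial K3) = T (n:ℤ) * T (m:ℤ) * T (N:ℤ) := by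
      push_cast
      rw [← T_add, ← T_add]
    have eT2 : (T (k + (N:ℤ)) : LaurentPolynomial K3) = T k * T (N:ℤ) := by rw [← T_add]
    rw [eT, eT2]
    ring
  have hlam : lam ≠ 0 := by
    rintro rfl
    simp only [map_zero, zero_mul] at heq
    have hP0 : ((X - 1) ^ 2 * q : K3[X]) = 0 := Polynomial.toLaurent_injective (by simpa using heq)
    have hX1 : (X - 1 : K3[X]) ≠ 0 := by
      have : (X - 1 : K3[X]) = X - Polynomial.C 1 := by simp
      rw [this]; exact X_sub_C_ne_zero 1
    exact (mul_ne_zero (pow_ne_zero 2 hX1) hqne) hP0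
  -- q divides F or G
  have hq_dvd : q ∣ Polynomial.C lam * X ^ M * F * G := by
    rw [← hPX]; exact ⟨(X - 1) ^ 2 * X ^ (n + m + N), by ring⟩
  have hqC : ¬ q ∣ Polynomial.C lam :=
    hnd _ (by simpa using hlam) (by simp)
  have hqXM : ¬ q ∣ (X : K3[X]) ^ M := fun h => hqX (hq_prime.dvd_of_dvd_pow h)
  have hf_eq : f = toLaurent F * T (-(n:ℤ)) := by
    have h1 : toLaurent F * T (-(n:ℤ)) = f * T (n:ℤ) * T (-(n:ℤ)) := by rw [hF]
    rw [h1, mul_assoc, ← T_add]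
    norm_num
  have hsymTk : ∀ j : ℤ, conj.symm (T j) = T (-j) := by
    intro j
    apply conj.injective
    rw [RingEquiv.apply_symm_apply, hconjTk, neg_neg]
  have hFtoG : q ∣ F → q ∣ G := by
    rintro ⟨F1, hF1⟩
    apply hdvd_trans
    rw [hG]
    have hcf : conj f = toLaurent q * (T (-2:ℤ) * conj (toLaurent F1) * T (n:ℤ)) := by
      rw [hf_eq, hF1]
      simp only [map_mul, hconjq, hconjTk, neg_neg]
      ring
    rw [hcf]
    exact ⟨T (-2:ℤ) * conj (toLaurent F1) * T (n:ℤ) * T (m:ℤ), by ring⟩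
  have hGtoF : q ∣ G → q ∣ F := by
    rintro ⟨G1, hG1⟩
    apply hdvd_trans
    rw [hF]
    have hcf : conj f = toLaurent q * toLaurent G1 * T (-(m:ℤ)) := by
      have h1 : toLaurent (q * G1) * T (-(m:ℤ)) = conj f * T (m:ℤ) * T (-(m:ℤ)) := by
        rw [← hG1, hG]
      rw [map_mul] at h1
      rw [h1, mul_assoc (conj f), ← T_add]
      norm_num
    have hsymq : conj.symm (toLaurent q) = toLaurent q * T (-2:ℤ) := by
      have h := congrArg conj.symm hconjq
      rw [RingEquiv.symm_apply_apply, map_mul, hsymTk] at h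
      have h2 := congrArg (fun z => z * T (-2:ℤ)) h
      simp only [neg_neg] at h2
      rw [mul_assoc, ← T_add] at h2
      norm_num at h2
      exact h2.symm
    have hff : f = conj.symm (conj f) := (RingEquiv.symm_apply_apply conj f).symm
    rw [hff, hcf]
    simp only [map_mul, hsymq, hsymTk, neg_neg]
    exact ⟨T (-2:ℤ) * conj.symm (toLaurent G1) * T (m:ℤ) * T (n:ℤ), by ring⟩
  have hFG : q ∣ F ∧ q ∣ G := by
    rcases hq_prime.dvd_mul.mp hq_dvd with h | hGd
    · rcases hq_prime.dvd_mul.mp h with h2 | hFd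
      · rcases hq_prime.dvd_mul.mp h2 with h3 | h3
        · exact absurd h3 hqC
        · exact absurd h3 hqXM
      · exact ⟨hFd, hFtoG hFd⟩
    · exact ⟨hGtoF hGd, hGd⟩
  obtain ⟨⟨F1, hF1⟩, ⟨G1, hG1⟩⟩ := hFG
  have hcan : (X - 1) ^ 2 * X ^ (n + m + N) =
      Polynomial.C lam * X ^ M * (q * F1 * G1) := by
    apply mul_left_cancel₀ hqne
    rw [hF1, hG1] at hPX
    linear_combination hPX
  have hqdvd2 : q ∣ (X - 1 : K3[X]) ^ 2 * X ^ (n + m + N) := by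
    rw [hcan]
    exact ⟨Polynomial.C lam * X ^ M * F1 * G1, by ring⟩
  rcases hq_prime.dvd_mul.mp hqdvd2 with h | h
  · exact hqX1 (hq_prime.dvd_of_dvd_pow h)
  · exact hqX (hq_prime.dvd_of_dvd_pow h)

/-- `3t² + 5t + 3` is irreducible over `Q(ζ_3)`; consequently `(t−1)²(3t²+5t+3)` is not a
norm `λ t^k f(t) f̄(t)` in `Q(ζ_3)[t,t⁻¹]`, where the involution sends `t ↦ t⁻¹` and
`ζ_3 ↦ ζ_3⁻¹`. -/
theorem stmt17 (ζ : CyclotomicField 3 ℚ) (hζ : IsPrimitiveRoot ζ 3)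
    (σ : CyclotomicField 3 ℚ ≃+* CyclotomicField 3 ℚ) (hσ : σ ζ = ζ⁻¹)
    (conj : LaurentPolynomial (CyclotomicField 3 ℚ) ≃+*
            LaurentPolynomial (CyclotomicField 3 ℚ))
    (hconjC : ∀ a, conj (LaurentPolynomial.C a) = LaurentPolynomial.C (σ a))
    (hconjT : conj (T 1) = T (-1)) :
    Irreducible (Polynomial.C 3 * X ^ 2 + Polynomial.C 5 * X + Polynomial.C 3 : Polynomial (CyclotomicField 3 ℚ)) ∧
    ¬ ∃ (lam : CyclotomicField 3 ℚ) (k : ℤ)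
        (f : LaurentPolynomial (CyclotomicField 3 ℚ)),
        ((X - 1) ^ 2 * (Polynomial.C 3 * X ^ 2 + Polynomial.C 5 * X + Polynomial.C 3) :
            Polynomial (CyclotomicField 3 ℚ)).toLaurent =
          LaurentPolynomial.C lam * T k * f * conj f := by
  exact ⟨q_irred ζ hζ, part2 ζ hζ σ conj hconjC hconjT⟩
end
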